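/- Let φ, α, κ, γ̃_ij, A_ij, Γ_i be smooth fields on ℝ × ℝ³ satisfying the linearized BSSN evolution equations (E3) and (E5), and let t₀ ∈ ℝ. Assume that at time t₀ the constraints Γ_i(t₀,x) = ∂_l γ̃_il(t₀,x) (for all i) and ∂_l Γ_l(t₀,x) − 8Δφ(t₀,x) = 0 hold for all x ∈ ℝ³. Then ∂_t M_i(t₀,x) = 0 for all x ∈ ℝ³ and each i, where M_i := ∂_l A_il − (2/3)∂_i κ is the momentum constraint quantity. -/

import Mathlib

noncomputable section

/-- Spacetime ℝ × ℝ³. -/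
abbrev Spc : Type := ℝ × (Fin 3 → ℝ)

/-- Time derivative ∂_t. -/
noncomputable def pt (f : Spc → ℝ) : Spc → ℝ :=
  fun p => deriv (fun s => f (s, p.2)) p.1

/-- Spatial partial derivative ∂_i. -/
noncomputable def ps (i : Fin 3) (f : Spc → ℝ) : Spc → ℝ :=
  fun p => deriv (fun s => f (p.1, Function.update p.2 i s)) (p.2 i)

/-- Spatial Laplacian Δ = Σ_i ∂_i ∂_i. -/
noncomputable def lap (f : Spc → ℝ) : Spc → ℝ :=
  fun p => ∑ i : Fin 3, ps i (ps i f) p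

/-- Kronecker delta δ_ij. -/
noncomputable def kron (i j : Fin 3) : ℝ := if i = j then 1 else 0

namespace BSSNAux

noncomputable def dd (v : Spc) (f : Spc → ℝ) : Spc → ℝ := fun p => fderiv ℝ f p v

noncomputable def ev (i : Fin 3) : Spc := (0, Pi.single i 1)

noncomputable def et : Spc := (1, 0)

lemma dd_smooth (v : Spc) {f : Spc → ℝ} (hf : ContDiff ℝ (⊤ : ℕ∞) f) :
    ContDiff ℝ (⊤ : ℕ∞) (dd v f) :=
  (hf.fderiv_right (le_refl _)).clm_apply contDiff_const

lemma ps_eq (i : Fin 3) {f : Spc → ℝ} (hf : Differentiable ℝ f) :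
    ps i f = dd (ev i) f := by
  funext p
  have h1 : HasDerivAt (fun s => ((p.1, Function.update p.2 i s) : Spc))
      ((0, Pi.single i 1) : Spc) (p.2 i) :=
    (hasDerivAt_const _ _).prodMk (hasDerivAt_update p.2 i (p.2 i))
  have h2 : HasFDerivAt f (fderiv ℝ f p) ((p.1, Function.update p.2 i (p.2 i)) : Spc) := by
    rw [Function.update_eq_self]; exact (hf _).hasFDerivAt
  have h3 := h2.comp_hasDerivAt (p.2 i) h1
  exact h3.deriv

lemma pt_eq {f : Spc → ℝ} (hf : Differentiable ℝ f) : pt f = dd et f := by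
  funext p
  have h1 : HasDerivAt (fun s => ((s, p.2) : Spc)) ((1, 0) : Spc) p.1 :=
    (hasDerivAt_id _).prodMk (hasDerivAt_const _ _)
  have h2 : HasFDerivAt f (fderiv ℝ f p) ((p.1, p.2) : Spc) := (hf _).hasFDerivAt
  exact (h2.comp_hasDerivAt p.1 h1).deriv

lemma ps_smooth (i : Fin 3) {f : Spc → ℝ} (hf : ContDiff ℝ (⊤ : ℕ∞) f) :
    ContDiff ℝ (⊤ : ℕ∞) (ps i f) := by
  rw [ps_eq i (hf.differentiable (by simp))]; exact dd_smooth _ hf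

lemma dd_add (v : Spc) {f g : Spc → ℝ} (hf : Differentiable ℝ f) (hg : Differentiable ℝ g) :
    dd v (fun p => f p + g p) = fun p => dd v f p + dd v g p := by
  funext p
  simp only [dd, fderiv_fun_add (hf p) (hg p), ContinuousLinearMap.add_apply]

lemma dd_sub (v : Spc) {f g : Spc → ℝ} (hf : Differentiable ℝ f) (hg : Differentiable ℝ g) :
    dd v (fun p => f p - g p) = fun p => dd v f p - dd v g p := by
  funext p
  simp only [dd, fderiv_fun_sub (hf p) (hg p), ContinuousLinearMap.sub_apply]

lemma dd_const_mul (v : Spc) (c : ℝ) {f : Spc → ℝ} (hf : Differentiable ℝ f) :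
    dd v (fun p => c * f p) = fun p => c * dd v f p := by
  funext p
  simp only [dd, fderiv_const_mul (hf p) c, ContinuousLinearMap.smul_apply, smul_eq_mul, mul_add]

lemma dd_neg (v : Spc) {f : Spc → ℝ} :
    dd v (fun p => -(f p)) = fun p => -(dd v f p) := by
  funext p
  simp only [dd, fderiv_fun_neg, ContinuousLinearMap.neg_apply]

lemma dd_sum (v : Spc) {F : Fin 3 → Spc → ℝ} (hF : ∀ l, Differentiable ℝ (F l)) :
    dd v (fun p => ∑ l, F l p) = fun p => ∑ l, dd v (F l) p := by
  funext p
  simp only [dd, fderiv_fun_sum (fun l _ => (hF l p)), ContinuousLinearMap.sum_apply]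

lemma dd_comm (v w : Spc) {f : Spc → ℝ} (hf : ContDiff ℝ (⊤ : ℕ∞) f) :
    dd v (dd w f) = dd w (dd v f) := by
  funext p
  have hdf : Differentiable ℝ (fderiv ℝ f) :=
    (hf.fderiv_right (m := (⊤ : ℕ∞)) (le_refl _)).differentiable (by simp)
  have key : ∀ a b : Spc, dd a (dd b f) p = fderiv ℝ (fderiv ℝ f) p a b := by
    intro a b
    have : dd b f = fun q => (ContinuousLinearMap.apply ℝ ℝ b) (fderiv ℝ f q) := rfl
    rw [dd, this]
    rw [show (fun q => (ContinuousLinearMap.apply ℝ ℝ b) (fderiv ℝ f q))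
        = (ContinuousLinearMap.apply ℝ ℝ b) ∘ (fderiv ℝ f) from rfl,
      fderiv_comp p (ContinuousLinearMap.apply ℝ ℝ b).differentiableAt (hdf p)]
    simp [ContinuousLinearMap.fderiv]
  rw [key v w, key w v]
  exact second_derivative_symmetric (fun y => (hf.differentiable (by simp) y).hasFDerivAt)
    (hdf p).hasFDerivAt v w

end BSSNAux

namespace BSSNAux

lemma sm_diff {f : Spc → ℝ} (hf : ContDiff ℝ (⊤ : ℕ∞) f) : Differentiable ℝ f :=
  hf.differentiable (by simp)

lemma ps_congr_time {f g : Spc → ℝ} {t₀ : ℝ} (h : ∀ y, f (t₀, y) = g (t₀, y))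
    (i : Fin 3) (x : Fin 3 → ℝ) : ps i f (t₀, x) = ps i g (t₀, x) := by
  simp only [ps]
  congr 1
  funext s
  exact h _

lemma lap_congr_time {f g : Spc → ℝ} {t₀ : ℝ} (h : ∀ y, f (t₀, y) = g (t₀, y))
    (x : Fin 3 → ℝ) : lap f (t₀, x) = lap g (t₀, x) := by
  simp only [lap]
  refine Finset.sum_congr rfl fun m _ => ?_
  exact ps_congr_time (fun y => ps_congr_time h m y) m x

lemma lap_eq {f : Spc → ℝ} (hf : ContDiff ℝ (⊤ : ℕ∞) f) :
    lap f = fun p => ∑ m, dd (ev m) (dd (ev m) f) p := by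
  funext p
  simp only [lap]
  refine Finset.sum_congr rfl fun m _ => ?_
  rw [ps_eq m (sm_diff hf), ps_eq m (sm_diff (dd_smooth (ev m) hf))]

lemma lap_smooth {f : Spc → ℝ} (hf : ContDiff ℝ (⊤ : ℕ∞) f) :
    ContDiff ℝ (⊤ : ℕ∞) (lap f) := by
  rw [lap_eq hf]
  exact ContDiff.sum fun m _ => dd_smooth _ (dd_smooth _ hf)

lemma lap_sum {F : Fin 3 → Spc → ℝ} (hF : ∀ l, ContDiff ℝ (⊤ : ℕ∞) (F l)) :
    lap (fun p => ∑ l, F l p) = fun p => ∑ l, lap (F l) p := by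
  have hsum : ContDiff ℝ (⊤ : ℕ∞) (fun p => ∑ l, F l p) := ContDiff.sum fun l _ => hF l
  funext p
  rw [lap_eq hsum]
  show (∑ m : Fin 3, dd (ev m) (dd (ev m) fun p => ∑ l, F l p) p) = _
  have h1 : ∀ m : Fin 3, dd (ev m) (dd (ev m) fun p => ∑ l, F l p) p
      = ∑ l, dd (ev m) (dd (ev m) (F l)) p := by
    intro m
    rw [dd_sum (ev m) (fun l => sm_diff (hF l)),
      dd_sum (ev m) (fun l => sm_diff (dd_smooth (ev m) (hF l)))]
  rw [Finset.sum_congr rfl (fun m _ => h1 m), Finset.sum_comm]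
  exact Finset.sum_congr rfl fun l _ => (congrFun (lap_eq (hF l)) p).symm

lemma dd_lap (u : Spc) {f : Spc → ℝ} (hf : ContDiff ℝ (⊤ : ℕ∞) f) :
    dd u (lap f) = lap (dd u f) := by
  rw [lap_eq hf, lap_eq (dd_smooth u hf),
    dd_sum u (fun m => sm_diff (dd_smooth (ev m) (dd_smooth (ev m) hf)))]
  funext p
  refine Finset.sum_congr rfl fun m _ => ?_
  rw [dd_comm u (ev m) (dd_smooth (ev m) hf), dd_comm u (ev m) hf]

lemma dd_expand (v : Spc) (a b c d e f g : Spc → ℝ)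
    (ha : ContDiff ℝ (⊤ : ℕ∞) a) (hb : ContDiff ℝ (⊤ : ℕ∞) b) (hc : ContDiff ℝ (⊤ : ℕ∞) c)
    (hd : ContDiff ℝ (⊤ : ℕ∞) d) (he : ContDiff ℝ (⊤ : ℕ∞) e) (hf : ContDiff ℝ (⊤ : ℕ∞) f)
    (hg : ContDiff ℝ (⊤ : ℕ∞) g) (c₁ c₂ c₃ c₄ c₅ : ℝ) :
    dd v (fun q => c₁ * a q + c₂ * (b q + c q) - c₃ * d q - c₄ * e q - f q + c₅ * g q)
      = fun q => c₁ * dd v a q + c₂ * (dd v b q + dd v c q) - c₃ * dd v d q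
          - c₄ * dd v e q - dd v f q + c₅ * dd v g q := by
  funext q
  have H : HasFDerivAt
      (fun q => c₁ * a q + c₂ * (b q + c q) - c₃ * d q - c₄ * e q - f q + c₅ * g q)
      (c₁ • fderiv ℝ a q + c₂ • (fderiv ℝ b q + fderiv ℝ c q) - c₃ • fderiv ℝ d q
        - c₄ • fderiv ℝ e q - fderiv ℝ f q + c₅ • fderiv ℝ g q) q :=
    (((((((sm_diff ha q).hasFDerivAt.const_mul c₁).add
      ((((sm_diff hb q).hasFDerivAt.add (sm_diff hc q).hasFDerivAt)).const_mul c₂)).sub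
      ((sm_diff hd q).hasFDerivAt.const_mul c₃)).sub
      ((sm_diff he q).hasFDerivAt.const_mul c₄)).sub
      (sm_diff hf q).hasFDerivAt).add
      ((sm_diff hg q).hasFDerivAt.const_mul c₅))
  show fderiv ℝ _ q v = _
  rw [H.fderiv]
  simp [dd, ContinuousLinearMap.add_apply, ContinuousLinearMap.sub_apply,
    ContinuousLinearMap.smul_apply, smul_eq_mul, mul_add]

end BSSNAux

open BSSNAux in
/-- If (E3) and (E5) hold and, at time `t₀`, the constraints `Γ_i = ∂_l γ̃_il` and
`∂_l Γ_l − 8Δφ = 0` hold, then `∂_t M_i(t₀,·) = 0`. -/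
theorem momentum_constraint_initial_time_derivative_vanishes
    (φ α κ : Spc → ℝ) (Γ : Fin 3 → Spc → ℝ)
    (γ A : Fin 3 → Fin 3 → Spc → ℝ)
    (hφ : ContDiff ℝ (⊤ : ℕ∞) φ) (hα : ContDiff ℝ (⊤ : ℕ∞) α)
    (hκ : ContDiff ℝ (⊤ : ℕ∞) κ)
    (hΓ : ∀ i, ContDiff ℝ (⊤ : ℕ∞) (Γ i))
    (hγ : ∀ i j, ContDiff ℝ (⊤ : ℕ∞) (γ i j)) (hA : ∀ i j, ContDiff ℝ (⊤ : ℕ∞) (A i j))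
    (hγsym : ∀ i j, γ i j = γ j i) (hAsym : ∀ i j, A i j = A j i)
    (E3 : ∀ p, pt κ p = -(lap α p))
    (E5 : ∀ i j p, pt (A i j) p =
      -(1/2) * lap (γ i j) p + (1/2) * (ps i (Γ j) p + ps j (Γ i) p)
        - 2 * ps i (ps j φ) p - 2 * kron i j * lap φ p
        - ps i (ps j α) p + (1/3) * kron i j * lap α p)
    (t₀ : ℝ)
    (hGammaConstr : ∀ i, ∀ x : Fin 3 → ℝ, Γ i (t₀, x) = ∑ l, ps l (γ i l) (t₀, x))
    (hHamConstr : ∀ x : Fin 3 → ℝ,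
      (∑ l, ps l (Γ l) (t₀, x)) - 8 * lap φ (t₀, x) = 0)
    (M : Fin 3 → Spc → ℝ)
    (hM : ∀ i, M i = fun p => (∑ l, ps l (A i l) p) - (2/3) * ps i κ p) :
    ∀ i, ∀ x : Fin 3 → ℝ, pt (M i) (t₀, x) = 0 := by
  intro i x
  -- M i in dd form
  have hMfun : M i = fun q => (∑ l, dd (ev l) (A i l) q) - (2/3) * dd (ev i) κ q := by
    rw [hM i, ps_eq i (sm_diff hκ)]
    funext q
    congr 1
    exact Finset.sum_congr rfl fun l _ => congrFun (ps_eq l (sm_diff (hA i l))) q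
  have smsum : ContDiff ℝ (⊤ : ℕ∞) (fun q => ∑ l, dd (ev l) (A i l) q) :=
    ContDiff.sum fun l _ => dd_smooth _ (hA i l)
  have smM : ContDiff ℝ (⊤ : ℕ∞) (M i) := by
    rw [hMfun]
    exact smsum.sub (contDiff_const.mul (dd_smooth _ hκ))
  -- step 1 & 2
  have h2 : pt (M i) (t₀, x)
      = (∑ l, dd et (dd (ev l) (A i l)) (t₀, x)) - (2/3) * dd et (dd (ev i) κ) (t₀, x) := by
    rw [pt_eq (sm_diff smM), hMfun,
      dd_sub et (sm_diff smsum) ((sm_diff (dd_smooth (ev i) hκ)).const_mul (2/3 : ℝ)),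
      dd_sum et (fun l => sm_diff (dd_smooth (ev l) (hA i l))),
      dd_const_mul et (2/3 : ℝ) (sm_diff (dd_smooth (ev i) hκ))]
  -- E5 in dd form
  have E5' : ∀ j, pt (A i j) = fun q =>
      -(1/2) * lap (γ i j) q + (1/2) * (dd (ev i) (Γ j) q + dd (ev j) (Γ i) q)
        - 2 * dd (ev i) (dd (ev j) φ) q - 2 * kron i j * lap φ q
        - dd (ev i) (dd (ev j) α) q + (1/3) * kron i j * lap α q := by
    intro j
    funext q
    rw [E5 i j q, ps_eq i (sm_diff (hΓ j)), ps_eq j (sm_diff (hΓ i)),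
      ps_eq j (sm_diff hφ), ps_eq i (sm_diff (dd_smooth (ev j) hφ)),
      ps_eq j (sm_diff hα), ps_eq i (sm_diff (dd_smooth (ev j) hα))]
  -- per-l expansion with commutations
  have h4 : ∀ l, dd et (dd (ev l) (A i l)) (t₀, x)
      = -(1/2) * lap (dd (ev l) (γ i l)) (t₀, x)
        + (1/2) * (dd (ev i) (dd (ev l) (Γ l)) (t₀, x) + dd (ev l) (dd (ev l) (Γ i)) (t₀, x))
        - 2 * dd (ev i) (dd (ev l) (dd (ev l) φ)) (t₀, x)
        - 2 * kron i l * dd (ev l) (lap φ) (t₀, x)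
        - dd (ev i) (dd (ev l) (dd (ev l) α)) (t₀, x)
        + (1/3) * kron i l * dd (ev l) (lap α) (t₀, x) := by
    intro l
    rw [dd_comm et (ev l) (hA i l), ← pt_eq (sm_diff (hA i l)), E5' l,
      dd_expand (ev l) _ _ _ _ _ _ _ (lap_smooth (hγ i l)) (dd_smooth _ (hΓ l))
        (dd_smooth _ (hΓ i)) (dd_smooth _ (dd_smooth _ hφ)) (lap_smooth hφ)
        (dd_smooth _ (dd_smooth _ hα)) (lap_smooth hα) (-(1/2)) (1/2) 2 (2 * kron i l)
        ((1/3) * kron i l)]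
    rw [dd_lap (ev l) (hγ i l),
      dd_comm (ev l) (ev i) (hΓ l),
      dd_comm (ev l) (ev i) (dd_smooth (ev l) hφ),
      dd_comm (ev l) (ev i) (dd_smooth (ev l) hα)]
  -- split the sum
  have hS : (∑ l, dd et (dd (ev l) (A i l)) (t₀, x))
      = -(1/2) * (∑ l, lap (dd (ev l) (γ i l)) (t₀, x))
        + (1/2) * ((∑ l, dd (ev i) (dd (ev l) (Γ l)) (t₀, x))
            + (∑ l, dd (ev l) (dd (ev l) (Γ i)) (t₀, x)))
        - 2 * (∑ l, dd (ev i) (dd (ev l) (dd (ev l) φ)) (t₀, x))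
        - 2 * (∑ l, kron i l * dd (ev l) (lap φ) (t₀, x))
        - (∑ l, dd (ev i) (dd (ev l) (dd (ev l) α)) (t₀, x))
        + (1/3) * (∑ l, kron i l * dd (ev l) (lap α) (t₀, x)) := by
    rw [Finset.sum_congr rfl (fun l _ => h4 l)]
    simp only [Fin.sum_univ_three]
    ring
  -- evaluate the individual sums
  have e1 : (∑ l, lap (dd (ev l) (γ i l)) (t₀, x)) = lap (Γ i) (t₀, x) := by
    have hslice : ∀ y, (fun q => ∑ l, dd (ev l) (γ i l) q) (t₀, y) = Γ i (t₀, y) := by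
      intro y
      simp only
      rw [hGammaConstr i y]
      exact Finset.sum_congr rfl fun l _ => (congrFun (ps_eq l (sm_diff (hγ i l))) _).symm
    calc (∑ l, lap (dd (ev l) (γ i l)) (t₀, x))
        = lap (fun q => ∑ l, dd (ev l) (γ i l) q) (t₀, x) :=
          (congrFun (lap_sum (fun l => dd_smooth _ (hγ i l))) _).symm
      _ = lap (Γ i) (t₀, x) := lap_congr_time hslice x
  have e2 : (∑ l, dd (ev i) (dd (ev l) (Γ l)) (t₀, x))
      = 8 * dd (ev i) (lap φ) (t₀, x) := by
    have hGsm : ContDiff ℝ (⊤ : ℕ∞) (fun q => ∑ l, dd (ev l) (Γ l) q) :=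
      ContDiff.sum fun l _ => dd_smooth _ (hΓ l)
    have h8sm : ContDiff ℝ (⊤ : ℕ∞) (fun q => 8 * lap φ q) :=
      contDiff_const.mul (lap_smooth hφ)
    have hslice : ∀ y, (fun q => ∑ l, dd (ev l) (Γ l) q) (t₀, y)
        = (fun q => 8 * lap φ q) (t₀, y) := by
      intro y
      simp only
      have h0 := hHamConstr y
      have : (∑ l, ps l (Γ l) (t₀, y)) = 8 * lap φ (t₀, y) := by linarith
      rw [← this]
      exact Finset.sum_congr rfl fun l _ => (congrFun (ps_eq l (sm_diff (hΓ l))) _).symm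
    calc (∑ l, dd (ev i) (dd (ev l) (Γ l)) (t₀, x))
        = dd (ev i) (fun q => ∑ l, dd (ev l) (Γ l) q) (t₀, x) :=
          (congrFun (dd_sum (ev i) (fun l => sm_diff (dd_smooth _ (hΓ l)))) _).symm
      _ = ps i (fun q => ∑ l, dd (ev l) (Γ l) q) (t₀, x) :=
          (congrFun (ps_eq i (sm_diff hGsm)) _).symm
      _ = ps i (fun q => 8 * lap φ q) (t₀, x) := ps_congr_time hslice i x
      _ = dd (ev i) (fun q => 8 * lap φ q) (t₀, x) := congrFun (ps_eq i (sm_diff h8sm)) _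
      _ = 8 * dd (ev i) (lap φ) (t₀, x) :=
          congrFun (dd_const_mul (ev i) 8 (sm_diff (lap_smooth hφ))) _
  have e3 : (∑ l, dd (ev l) (dd (ev l) (Γ i)) (t₀, x)) = lap (Γ i) (t₀, x) :=
    (congrFun (lap_eq (hΓ i)) _).symm
  have e4 : (∑ l, dd (ev i) (dd (ev l) (dd (ev l) φ)) (t₀, x))
      = dd (ev i) (lap φ) (t₀, x) := by
    rw [← congrFun (dd_sum (ev i)
      (fun l => sm_diff (dd_smooth (ev l) (dd_smooth (ev l) hφ)))) ((t₀, x) : Spc),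
      ← lap_eq hφ]
  have e6 : (∑ l, dd (ev i) (dd (ev l) (dd (ev l) α)) (t₀, x))
      = dd (ev i) (lap α) (t₀, x) := by
    rw [← congrFun (dd_sum (ev i)
      (fun l => sm_diff (dd_smooth (ev l) (dd_smooth (ev l) hα)))) ((t₀, x) : Spc),
      ← lap_eq hα]
  have e5 : (∑ l, kron i l * dd (ev l) (lap φ) (t₀, x)) = dd (ev i) (lap φ) (t₀, x) := by
    simp [kron, ite_mul, Finset.sum_ite_eq, Finset.mem_univ]
  have e7 : (∑ l, kron i l * dd (ev l) (lap α) (t₀, x)) = dd (ev i) (lap α) (t₀, x) := by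
    simp [kron, ite_mul, Finset.sum_ite_eq, Finset.mem_univ]
  -- the κ term
  have hκterm : dd et (dd (ev i) κ) (t₀, x) = -(dd (ev i) (lap α) (t₀, x)) := by
    rw [dd_comm et (ev i) hκ, ← pt_eq (sm_diff hκ),
      show pt κ = fun q => -(lap α q) from funext E3, dd_neg (ev i) (f := lap α)]
  rw [h2, hS, e1, e2, e3, e4, e5, e6, e7, hκterm]
  ring
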